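/- For the regular language L = (00+11)^+ over {0,1}, the binary decimation bd(L) = {ww : w ∈ {0,1}^+}, which is not context-free. Hence neither the regular nor context-free languages are closed under bd. -/

import Mathlib

mutual
/-- The odd-indexed letters a₁a₃a₅⋯ of a word. -/
def odds {α : Type*} : List α → List α
  | [] => []
  | a :: l => a :: evens l
/-- The even-indexed letters a₂a₄a₆⋯ of a word. -/
def evens {α : Type*} : List α → List α
  | [] => []
  | _ :: l => odds l
end

/-- Binary decimation: the odd-indexed letters followed by the even-indexed
letters. -/
def bd {α : Type*} (w : List α) : List α := odds w ++ evens w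

/-- Binary decimation of a language, elementwise. -/
def bdLang {α : Type*} (L : Language α) : Language α := {z | ∃ w ∈ L, z = bd w}

open ContextFreeGrammar
universe uT
variable {T : Type uT}

inductive PT (T N : Type*) where
  | leaf (a : T) : PT T N
  | node (A : N) (c : List (PT T N)) : PT T N

namespace PT
variable {N : Type*}

def root : PT T N → Symbol T N
  | leaf a => .terminal a
  | node A _ => .nonterminal A

mutual
def yield : PT T N → List T
  | .leaf a => [a]
  | .node _ c => yields c
def yields : List (PT T N) → List T
  | [] => []
  | t :: ts => yield t ++ yields ts
end

mutual
def size : PT T N → ℕ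
  | .leaf _ => 1
  | .node _ c => 1 + sizes c
def sizes : List (PT T N) → ℕ
  | [] => 0
  | t :: ts => size t + sizes ts
end

mutual
def height : PT T N → ℕ
  | .leaf _ => 0
  | .node _ c => 1 + heights c
def heights : List (PT T N) → ℕ
  | [] => 0
  | t :: ts => max (height t) (heights ts)
end

@[simp] lemma yield_leaf (a : T) : (leaf a : PT T N).yield = [a] := by simp [yield]
@[simp] lemma yield_node (A : N) (c : List (PT T N)) : (node A c).yield = yields c := by
  simp [yield]
@[simp] lemma yields_nil : yields ([] : List (PT T N)) = [] := by simp [yields]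
@[simp] lemma yields_cons (t : PT T N) (ts : List (PT T N)) :
    yields (t :: ts) = t.yield ++ yields ts := by simp [yields]

@[simp] lemma size_leaf (a : T) : (leaf a : PT T N).size = 1 := by simp [size]
@[simp] lemma size_node (A : N) (c : List (PT T N)) : (node A c).size = 1 + sizes c := by
  simp [size]
@[simp] lemma sizes_nil : sizes ([] : List (PT T N)) = 0 := by simp [sizes]
@[simp] lemma sizes_cons (t : PT T N) (ts : List (PT T N)) :
    sizes (t :: ts) = t.size + sizes ts := by simp [sizes]

@[simp] lemma height_leaf (a : T) : (leaf a : PT T N).height = 0 := by simp [height]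
@[simp] lemma height_node (A : N) (c : List (PT T N)) : (node A c).height = 1 + heights c := by
  simp [height]
@[simp] lemma heights_nil : heights ([] : List (PT T N)) = 0 := by simp [heights]
@[simp] lemma heights_cons (t : PT T N) (ts : List (PT T N)) :
    heights (t :: ts) = max t.height (heights ts) := by simp [heights]

lemma yields_append (a b : List (PT T N)) : yields (a ++ b) = yields a ++ yields b := by
  induction a with
  | nil => simp
  | cons t ts ih => simp [ih]

lemma sizes_append (a b : List (PT T N)) : sizes (a ++ b) = sizes a + sizes b := by
  induction a with
  | nil => simp
  | cons t ts ih => simp [ih]; omega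

lemma size_le_sizes {t : PT T N} {c : List (PT T N)} (h : t ∈ c) : t.size ≤ sizes c := by
  induction c with
  | nil => simp at h
  | cons s ts ih =>
    rcases List.mem_cons.1 h with rfl | h
    · simp
    · have := ih h; simp; omega

lemma height_le_heights {t : PT T N} {c : List (PT T N)} (h : t ∈ c) : t.height ≤ heights c := by
  induction c with
  | nil => simp at h
  | cons s ts ih =>
    rcases List.mem_cons.1 h with rfl | h
    · simp
    · have := ih h; simp; omega

lemma size_pos (t : PT T N) : 1 ≤ t.size := by
  cases t <;> simp

lemma exists_height_eq_heights {c : List (PT T N)} (h : c ≠ []) :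
    ∃ t ∈ c, t.height = heights c := by
  induction c with
  | nil => simp at h
  | cons s ts ih =>
    rcases eq_or_ne ts [] with rfl | hne
    · exact ⟨s, by simp⟩
    · obtain ⟨t, ht, hh⟩ := ih hne
      rcases le_total s.height (heights ts) with hle | hle
      · exact ⟨t, List.mem_cons_of_mem _ ht, by simp [hh]; omega⟩
      · exact ⟨s, by simp, by simp; omega⟩

/-- Reflexive-transitive subtree relation, with explicit splitting. -/
inductive Sub : PT T N → PT T N → Prop
  | refl (t) : Sub t t
  | child {s m : PT T N} (A : N) (c₁ c₂ : List (PT T N)) (h : Sub s m) :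
      Sub s (node A (c₁ ++ m :: c₂))

lemma Sub.trans {s t u : PT T N} (h1 : Sub s t) (h2 : Sub t u) : Sub s u := by
  induction h2 with
  | refl => exact h1
  | child A c₁ c₂ h ih => exact Sub.child A c₁ c₂ ih

lemma Sub.size_le {s t : PT T N} (h : Sub s t) : s.size ≤ t.size := by
  induction h with
  | refl => exact le_refl _
  | @child m A c₁ c₂ h ih =>
    have hm : m.size ≤ sizes (c₁ ++ m :: c₂) := size_le_sizes (by simp)
    simp only [size_node]
    omega

lemma Sub.height_le {s t : PT T N} (h : Sub s t) : s.height ≤ t.height := by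
  induction h with
  | refl => exact le_refl _
  | @child m A c₁ c₂ h ih =>
    have hm : m.height ≤ heights (c₁ ++ m :: c₂) := height_le_heights (by simp)
    simp only [height_node]
    omega

lemma Sub.of_mem {t : PT T N} {c : List (PT T N)} (A : N) (h : t ∈ c) :
    Sub t (node A c) := by
  obtain ⟨c₁, c₂, rfl⟩ := List.append_of_mem h
  exact Sub.child A c₁ c₂ (Sub.refl t)

end PT

open PT

section Grammar
variable {g : ContextFreeGrammar.{uT} T}

lemma derives_append {x x' y y' : List (Symbol T g.NT)} (hx : g.Derives x x')
    (hy : g.Derives y y') : g.Derives (x ++ y) (x' ++ y') :=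
  (hx.append_right y).trans (hy.append_left x')

/-- Valid parse trees for a grammar. -/
inductive Good (g : ContextFreeGrammar.{uT} T) : PT T g.NT → Prop
  | leaf (a : T) : Good g (.leaf a)
  | node (A : g.NT) (c : List (PT T g.NT))
      (hr : (⟨A, c.map PT.root⟩ : ContextFreeRule T g.NT) ∈ g.rules)
      (hc : ∀ t ∈ c, Good g t) : Good g (.node A c)

lemma good_sound : ∀ n : ℕ,
    (∀ t : PT T g.NT, t.size ≤ n → Good g t →
      g.Derives [t.root] (t.yield.map Symbol.terminal)) ∧
    (∀ c : List (PT T g.NT), sizes c ≤ n → (∀ x ∈ c, Good g x) →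
      g.Derives (c.map PT.root) ((yields c).map Symbol.terminal)) := by
  intro n
  induction n with
  | zero =>
    constructor
    · intro t ht _; have := t.size_pos; omega
    · intro c hc _
      cases c with
      | nil => simp; rfl
      | cons t ts => have := t.size_pos; simp at hc; omega
  | succ n ih =>
    have htree : ∀ t : PT T g.NT, t.size ≤ n + 1 → Good g t →
        g.Derives [t.root] (t.yield.map Symbol.terminal) := by
      intro t ht hg
      cases hg with
      | leaf a => simp [root]; rfl
      | node A c hr hc =>
        have hstep : g.Produces [Symbol.nonterminal A] (c.map PT.root) :=
          ⟨⟨A, c.map PT.root⟩, hr, ContextFreeRule.Rewrites.input_output⟩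
        have hsz : sizes c ≤ n := by simp at ht; omega
        exact (hstep.trans_derives (ih.2 c hsz hc)).trans (by simp; rfl)
    refine ⟨htree, ?_⟩
    intro c hc hgood
    cases c with
    | nil => simp; rfl
    | cons t ts =>
      simp only [sizes_cons] at hc
      have h1 : g.Derives [t.root] (t.yield.map Symbol.terminal) :=
        htree t (by omega) (hgood t (by simp))
      have h2 : g.Derives (ts.map PT.root) ((yields ts).map Symbol.terminal) :=
        ih.2 ts (by have := t.size_pos; omega) (fun x hx => hgood x (by simp [hx]))
      have := derives_append h1 h2
      simpa using this

lemma good_sound_tree {t : PT T g.NT} (hg : Good g t) :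
    g.Derives [t.root] (t.yield.map Symbol.terminal) :=
  (good_sound t.size).1 t le_rfl hg

lemma good_sound_forest {c : List (PT T g.NT)} (hg : ∀ x ∈ c, Good g x) :
    g.Derives (c.map PT.root) ((yields c).map Symbol.terminal) :=
  (good_sound (sizes c)).2 c le_rfl hg

lemma good_of_sub {s t : PT T g.NT} (h : Sub s t) (hg : Good g t) : Good g s := by
  induction h with
  | refl => exact hg
  | @child m A c₁ c₂ h ih =>
    cases hg with
    | node A c hr hc => exact ih (hc m (by simp))

lemma sub_context {s t : PT T g.NT} (h : Sub s t) (hg : Good g t) :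
    ∃ u z : List T, t.yield = u ++ s.yield ++ z ∧
      g.Derives [t.root] (u.map Symbol.terminal ++ [s.root] ++ z.map Symbol.terminal) := by
  induction h with
  | refl => exact ⟨[], [], by simp, by simp; rfl⟩
  | @child m A c₁ c₂ h ih =>
    cases hg with
    | node A c hr hc =>
      obtain ⟨u', z', hy, hd⟩ := ih (hc m (by simp))
      refine ⟨yields c₁ ++ u', z' ++ yields c₂, ?_, ?_⟩
      · simp [yields_append, hy]
      · have hstep : g.Produces [Symbol.nonterminal A] ((c₁ ++ m :: c₂).map PT.root) :=
          ⟨⟨A, (c₁ ++ m :: c₂).map PT.root⟩, hr, ContextFreeRule.Rewrites.input_output⟩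
        have h1 : g.Derives (c₁.map PT.root) ((yields c₁).map Symbol.terminal) :=
          good_sound_forest (fun x hx => hc x (by simp [hx]))
        have h2 : g.Derives (c₂.map PT.root) ((yields c₂).map Symbol.terminal) :=
          good_sound_forest (fun x hx => hc x (by simp [hx]))
        have hsplit : (c₁ ++ m :: c₂).map PT.root
            = c₁.map PT.root ++ ([m.root] ++ c₂.map PT.root) := by simp
        have hcomb : g.Derives ((c₁ ++ m :: c₂).map PT.root)
            ((yields c₁).map Symbol.terminal ++
              ((u'.map Symbol.terminal ++ [s.root] ++ z'.map Symbol.terminal) ++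
                (yields c₂).map Symbol.terminal)) := by
          rw [hsplit]
          exact derives_append h1 (derives_append (by simpa using hd) h2)
        refine (hstep.trans_derives hcomb).trans ?_
        simp only [root, List.map_append, List.append_assoc]
        rfl

lemma sub_replace {s t : PT T g.NT} (h : Sub s t) (hg : Good g t) :
    ∀ s' : PT T g.NT, Good g s' → s'.root = s.root →
    ∃ t', Good g t' ∧ t'.root = t.root ∧ t'.size + s.size = t.size + s'.size ∧
      ∃ u z : List T, t.yield = u ++ s.yield ++ z ∧ t'.yield = u ++ s'.yield ++ z := by
  induction h with
  | refl =>
    intro s' hgs hroot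
    exact ⟨s', hgs, hroot, by omega, [], [], by simp, by simp⟩
  | @child m A c₁ c₂ h ih =>
    intro s' hgs hroot
    cases hg with
    | node A c hr hc =>
      obtain ⟨m', hgm', hrootm', hsz, u', z', hy, hy'⟩ := ih (hc m (by simp)) s' hgs hroot
      refine ⟨.node A (c₁ ++ m' :: c₂), ?_, by simp [root], ?_, ?_⟩
      · refine Good.node A _ ?_ ?_
        · have : (c₁ ++ m' :: c₂).map PT.root = (c₁ ++ m :: c₂).map PT.root := by
            simp [hrootm']
          rw [this]; exact hr
        · intro x hx
          rcases List.mem_append.1 hx with hx | hx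
          · exact hc x (by simp [hx])
          · rcases List.mem_cons.1 hx with rfl | hx
            · exact hgm'
            · exact hc x (by simp [hx])
      · simp only [size_node, sizes_append, sizes_cons]
        omega
      · refine ⟨yields c₁ ++ u', z' ++ yields c₂, ?_, ?_⟩
        · simp [yields_append, hy]
        · simp [yields_append, hy']

lemma chain_lemma : ∀ n : ℕ, ∀ t : PT T g.NT, t.size ≤ n → Good g t →
    ∃ l : List (g.NT × PT T g.NT), t.height ≤ l.length ∧
      l.Pairwise (fun p q => Sub q.2 p.2 ∧ q.2.size < p.2.size) ∧
      ∀ p ∈ l, Sub p.2 t ∧ Good g p.2 ∧ ∃ c, p.2 = PT.node p.1 c := by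
  intro n
  induction n with
  | zero => intro t ht; have := t.size_pos; omega
  | succ n ih =>
    intro t ht hg
    cases hg with
    | leaf a => exact ⟨[], by simp, by simp, by simp⟩
    | node A c hr hc =>
      rcases eq_or_ne c [] with rfl | hne
      · refine ⟨[(A, .node A [])], by simp, by simp, ?_⟩
        intro p hp
        simp at hp
        subst hp
        exact ⟨Sub.refl _, Good.node A [] hr hc, [], rfl⟩
      · obtain ⟨m, hm, hhm⟩ := exists_height_eq_heights hne
        have hszm : m.size ≤ n := by
          have h1 := size_le_sizes hm
          simp only [size_node] at ht
          omega
        obtain ⟨l', hlen, hpw, hmem⟩ := ih m hszm (hc m hm)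
        have hsubm : Sub m (PT.node A c) := Sub.of_mem A hm
        have hszlt : m.size < (PT.node A c).size := by
          have := size_le_sizes hm; simp; omega
        refine ⟨(A, .node A c) :: l', ?_, ?_, ?_⟩
        · simp only [List.length_cons, height_node, hhm.symm] at *
          omega
        · refine List.Pairwise.cons ?_ hpw
          intro p hp
          obtain ⟨hsub, _, _⟩ := hmem p hp
          exact ⟨hsub.trans hsubm, lt_of_le_of_lt hsub.size_le hszlt⟩
        · intro p hp
          rcases List.mem_cons.1 hp with rfl | hp
          · exact ⟨Sub.refl _, Good.node A c hr hc, c, rfl⟩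
          · obtain ⟨hsub, hgp, hcp⟩ := hmem p hp
            exact ⟨hsub.trans hsubm, hgp, hcp⟩

lemma exists_sub_height : ∀ n : ℕ, ∀ t : PT T g.NT, t.size ≤ n →
    ∀ K : ℕ, 1 ≤ K → K ≤ t.height → ∃ t', Sub t' t ∧ t'.height = K := by
  intro n
  induction n with
  | zero => intro t ht; have := t.size_pos; omega
  | succ n ih =>
    intro t ht K hK1 hK
    rcases eq_or_lt_of_le hK with heq | hlt
    · exact ⟨t, Sub.refl t, heq.symm⟩
    · cases t with
      | leaf a => simp at hlt
      | node A c =>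
        rcases eq_or_ne c [] with rfl | hne
        · simp at hlt; omega
        · obtain ⟨m, hm, hhm⟩ := exists_height_eq_heights hne
          have hszm : m.size ≤ n := by
            have := size_le_sizes hm; simp only [size_node] at ht; omega
          have hKm : K ≤ m.height := by
            simp only [height_node] at hlt; omega
          obtain ⟨t', hsub, hh⟩ := ih m hszm K hK1 hKm
          exact ⟨t', hsub.trans (Sub.of_mem A hm), hh⟩

lemma yield_bound {M : ℕ} (hM2 : 2 ≤ M) (hMr : ∀ r ∈ g.rules, r.output.length ≤ M) :
    ∀ n : ℕ,
    (∀ t : PT T g.NT, t.size ≤ n → Good g t → t.yield.length ≤ M ^ t.height) ∧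
    (∀ c : List (PT T g.NT), sizes c ≤ n → (∀ x ∈ c, Good g x) →
      (yields c).length ≤ c.length * M ^ heights c) := by
  intro n
  induction n with
  | zero =>
    constructor
    · intro t ht _; have := t.size_pos; omega
    · intro c hc _
      cases c with
      | nil => simp
      | cons t ts => have := t.size_pos; simp at hc; omega
  | succ n ih =>
    have htree : ∀ t : PT T g.NT, t.size ≤ n + 1 → Good g t →
        t.yield.length ≤ M ^ t.height := by
      intro t ht hg
      cases hg with
      | leaf a => simp
      | node A c hr hc =>
        have hsz : sizes c ≤ n := by simp at ht; omega
        have h1 := ih.2 c hsz hc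
        have hcl : c.length ≤ M := by
          have := hMr _ hr
          simpa using this
        calc (PT.node A c).yield.length = (yields c).length := by simp
          _ ≤ c.length * M ^ heights c := h1
          _ ≤ M * M ^ heights c := Nat.mul_le_mul_right _ hcl
          _ = M ^ (1 + heights c) := by rw [pow_add, pow_one]
          _ = M ^ (PT.node A c).height := by simp
    refine ⟨htree, ?_⟩
    intro c hc hgood
    cases c with
    | nil => simp
    | cons t ts =>
      simp only [sizes_cons] at hc
      have h1 : t.yield.length ≤ M ^ t.height := htree t (by omega) (hgood t (by simp))
      have h2 : (yields ts).length ≤ ts.length * M ^ heights ts :=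
        ih.2 ts (by have := t.size_pos; omega) (fun x hx => hgood x (by simp [hx]))
      have e1 : M ^ t.height ≤ M ^ max t.height (heights ts) :=
        Nat.pow_le_pow_right (by omega) (le_max_left _ _)
      have e2 : M ^ heights ts ≤ M ^ max t.height (heights ts) :=
        Nat.pow_le_pow_right (by omega) (le_max_right _ _)
      have : (yields ts).length ≤ ts.length * M ^ max t.height (heights ts) :=
        le_trans h2 (Nat.mul_le_mul_left _ e2)
      simp only [yields_cons, List.length_append, heights_cons, List.length_cons]
      calc t.yield.length + (yields ts).length
          ≤ M ^ max t.height (heights ts) + ts.length * M ^ max t.height (heights ts) := by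
            omega
        _ = (ts.length + 1) * M ^ max t.height (heights ts) := by ring

end Grammar

section DerivesIn
variable {g : ContextFreeGrammar.{uT} T}

inductive DerivesIn (g : ContextFreeGrammar.{uT} T) :
    List (Symbol T g.NT) → List (Symbol T g.NT) → ℕ → Prop
  | refl (u : List (Symbol T g.NT)) : DerivesIn g u u 0
  | head {u v w : List (Symbol T g.NT)} {n : ℕ} :
      g.Produces u v → DerivesIn g v w n → DerivesIn g u w (n + 1)

lemma derives_iff_derivesIn {u v : List (Symbol T g.NT)} :
    g.Derives u v ↔ ∃ n, DerivesIn g u v n := by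
  constructor
  · intro h
    induction h using Relation.ReflTransGen.head_induction_on with
    | refl => exact ⟨0, DerivesIn.refl v⟩
    | head hp _ ih => obtain ⟨n, hn⟩ := ih; exact ⟨n + 1, DerivesIn.head hp hn⟩
  · rintro ⟨n, h⟩
    induction h with
    | refl => rfl
    | head hp _ ih => exact hp.trans_derives ih

lemma derivesIn_zero' {u v : List (Symbol T g.NT)} (h : DerivesIn g u v 0) : u = v := by
  cases h; rfl

lemma derivesIn_succ' {u v : List (Symbol T g.NT)} {n : ℕ} (h : DerivesIn g u v (n + 1)) :
    ∃ w, g.Produces u w ∧ DerivesIn g w v n := by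
  cases h with
  | head hp hrest => exact ⟨_, hp, hrest⟩

lemma no_rewrite_terminal {w : List T} {v : List (Symbol T g.NT)}
    (h : g.Produces (w.map Symbol.terminal) v) : False := by
  obtain ⟨r, _, hrw⟩ := h
  obtain ⟨p, q, hu, _⟩ := hrw.exists_parts
  have : Symbol.nonterminal r.input ∈ w.map (Symbol.terminal : T → Symbol T g.NT) := by
    rw [hu]; simp
  simp only [List.mem_map] at this
  obtain ⟨a, _, ha⟩ := this
  cases ha

lemma derivesIn_split : ∀ n : ℕ, ∀ x y : List (Symbol T g.NT), ∀ w : List T,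
    DerivesIn g (x ++ y) (w.map Symbol.terminal) n →
    ∃ (w₁ w₂ : List T) (n₁ n₂ : ℕ), w = w₁ ++ w₂ ∧ n₁ + n₂ = n ∧
      DerivesIn g x (w₁.map Symbol.terminal) n₁ ∧ DerivesIn g y (w₂.map Symbol.terminal) n₂ := by
  intro n
  induction n with
  | zero =>
    intro x y w h
    have heq : x ++ y = w.map Symbol.terminal := derivesIn_zero' h
    · refine ⟨w.take x.length, w.drop x.length, 0, 0, by simp, by simp, ?_, ?_⟩
      · have : x = (w.take x.length).map Symbol.terminal := by
          rw [List.map_take, ← heq]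
          simp
        rw [← this]; exact DerivesIn.refl x
      · have : y = (w.drop x.length).map Symbol.terminal := by
          rw [List.map_drop, ← heq]
          simp
        rw [← this]; exact DerivesIn.refl y
  | succ n ih =>
    intro x y w h
    obtain ⟨v, hp, hrest⟩ := derivesIn_succ' h
    · obtain ⟨r, hr, hrw⟩ := hp
      obtain ⟨p, q, hu, hv⟩ := hrw.exists_parts
      rw [List.append_assoc] at hu
      rcases List.append_eq_append_iff.1 hu with ⟨p', hp', hy'⟩ | ⟨c', hx', hq'⟩
      · -- rewrite inside y : p = x ++ p', y = p' ++ [nt] ++ q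
        subst hp'
        have hv' : v = x ++ (p' ++ r.output ++ q) := by
          rw [hv]; simp
        rw [hv'] at hrest
        obtain ⟨w₁, w₂, n₁, n₂, hw, hn, h1, h2⟩ := ih x (p' ++ r.output ++ q) w hrest
        refine ⟨w₁, w₂, n₁, n₂ + 1, hw, by omega, h1, ?_⟩
        have hyy : y = p' ++ [Symbol.nonterminal r.input] ++ q := by
          rw [← List.append_assoc] at hy'; exact hy'
        have hprod : g.Produces y (p' ++ r.output ++ q) := by
          rw [hyy]; exact ⟨r, hr, ContextFreeRule.rewrites_of_exists_parts r p' q⟩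
        exact DerivesIn.head hprod h2
      · -- x = p ++ c', [nt] ++ q = c' ++ y
        cases c' with
        | nil =>
          -- x = p, y = [nt] ++ q
          simp only [List.append_nil] at hx'
          subst hx'
          have hv' : v = x ++ (r.output ++ q) := by rw [hv]; simp
          rw [hv'] at hrest
          obtain ⟨w₁, w₂, n₁, n₂, hw, hn, h1, h2⟩ := ih x (r.output ++ q) w hrest
          refine ⟨w₁, w₂, n₁, n₂ + 1, hw, by omega, h1, ?_⟩
          have hprod : g.Produces y (r.output ++ q) := by
            have hy : y = [Symbol.nonterminal r.input] ++ q := by simpa using hq'.symm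
            rw [hy]
            exact ⟨r, hr, by simpa using ContextFreeRule.rewrites_of_exists_parts r [] q⟩
          exact DerivesIn.head hprod h2
        | cons s₀ c'' =>
          have hq2 : Symbol.nonterminal r.input :: q = s₀ :: (c'' ++ y) := by
            simpa using hq'
          injection hq2 with ha hb
          subst ha
          subst hb
          have hv' : v = (p ++ r.output ++ c'') ++ y := by rw [hv]; simp
          rw [hv'] at hrest
          obtain ⟨w₁, w₂, n₁, n₂, hw, hn, h1, h2⟩ := ih (p ++ r.output ++ c'') y w hrest
          refine ⟨w₁, w₂, n₁ + 1, n₂, hw, by omega, ?_, h2⟩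
          have hprod : g.Produces x (p ++ r.output ++ c'') := by
            rw [hx']
            exact ⟨r, hr, by
              have := ContextFreeRule.rewrites_of_exists_parts r p c''
              simpa using this⟩
          exact DerivesIn.head hprod h1

lemma derivesIn_zero {u v : List (Symbol T g.NT)} (h : DerivesIn g u v 0) : u = v := by
  cases h; rfl

@[simp] lemma yields_map_leaf (w : List T) :
    yields ((w.map (PT.leaf : T → PT T g.NT))) = w := by
  induction w with
  | nil => simp
  | cons a w ih => simp [ih]

lemma terminal_forest (w : List T) :
    ∃ ts : List (PT T g.NT), ts.map PT.root = w.map Symbol.terminal ∧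
      (∀ x ∈ ts, Good g x) ∧ yields ts = w := by
  refine ⟨w.map PT.leaf, ?_, ?_, by simp⟩
  · simp [root, Function.comp]
  · intro x hx
    simp only [List.mem_map] at hx
    obtain ⟨a, _, rfl⟩ := hx
    exact Good.leaf a

lemma derivesIn_to_forest : ∀ n : ℕ, ∀ m : ℕ, m ≤ n →
    ∀ l : List (Symbol T g.NT), ∀ w : List T,
    DerivesIn g l (w.map Symbol.terminal) m →
    ∃ ts : List (PT T g.NT), ts.map PT.root = l ∧ (∀ x ∈ ts, Good g x) ∧ yields ts = w := by
  intro n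
  induction n with
  | zero =>
    intro m hm l w h
    obtain rfl : m = 0 := by omega
    obtain rfl := derivesIn_zero h
    exact terminal_forest w
  | succ n ihn =>
    intro m hm
    -- inner induction on the length of l, allowing any m' ≤ m
    suffices H : ∀ k : ℕ, ∀ l : List (Symbol T g.NT), l.length ≤ k → ∀ (w : List T) (m' : ℕ),
        m' ≤ m → DerivesIn g l (w.map Symbol.terminal) m' →
        ∃ ts : List (PT T g.NT), ts.map PT.root = l ∧ (∀ x ∈ ts, Good g x) ∧ yields ts = w by
      intro l w h
      exact H l.length l le_rfl w m le_rfl h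
    intro k
    induction k with
    | zero =>
      intro l hk w m' _ h
      obtain rfl : l = [] := List.length_eq_zero_iff.1 (by omega)
      cases m' with
      | zero =>
        have heq := derivesIn_zero' h
        obtain rfl : w = [] := by
          cases w with
          | nil => rfl
          | cons a w => simp at heq
        exact ⟨[], by simp, by simp, by simp⟩
      | succ m'' =>
        obtain ⟨v, hp, _⟩ := derivesIn_succ' h
        exact absurd hp (fun hp => no_rewrite_terminal (w := []) (by simpa using hp))
    | succ k ihk =>
      intro l hk w m' hm' h
      cases l with
      | nil => exact ihk [] (by simp) w m' hm' h
      | cons s l' =>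
        cases l' with
        | nil =>
          cases s with
          | terminal a =>
            cases m' with
            | zero =>
              have heq := derivesIn_zero' h
              obtain rfl : w = [a] := by
                cases w with
                | nil => simp at heq
                | cons b w' =>
                  simp at heq
                  obtain ⟨rfl, hw'⟩ := heq
                  cases w' with
                  | nil => rfl
                  | cons c w'' => simp at hw'
              exact ⟨[.leaf a], by simp [root], by
                intro x hx; simp at hx; subst hx; exact Good.leaf a, by simp⟩
            | succ m'' =>
              obtain ⟨v, hp, _⟩ := derivesIn_succ' h
              exact absurd hp (fun hp => no_rewrite_terminal (w := [a]) (by simpa using hp))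
          | nonterminal B =>
            cases m' with
            | zero =>
              have heq := derivesIn_zero' h
              exfalso
              cases w with
              | nil => simp at heq
              | cons b w' => simp at heq
            | succ m'' =>
              obtain ⟨v, hp, hrest⟩ := derivesIn_succ' h
              obtain ⟨r, hr, hrw⟩ := hp
              obtain ⟨p, q, hu, hv⟩ := hrw.exists_parts
              have hpq : p = [] ∧ q = [] ∧ B = r.input := by
                cases p with
                | nil =>
                  cases q with
                  | nil => simp at hu; exact ⟨rfl, rfl, hu⟩
                  | cons _ _ =>
                    exfalso
                    have := congrArg List.length hu
                    simp at this
                | cons _ p' =>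
                  exfalso
                  have := congrArg List.length hu
                  simp at this
              obtain ⟨rfl, rfl, rfl⟩ := hpq
              simp only [List.nil_append, List.append_nil] at hv
              subst hv
              have hm'' : m'' ≤ n := by omega
              obtain ⟨ts, h1, h2, h3⟩ := ihn m'' hm'' r.output w hrest
              refine ⟨[.node r.input ts], by simp [root], ?_, by simp [h3]⟩
              intro x hx
              simp at hx
              subst hx
              refine Good.node r.input ts ?_ h2
              rw [h1]
              exact hr
        | cons s₂ l'' =>
          obtain ⟨w₁, w₂, n₁, n₂, hw, hn, h1, h2⟩ :=
            derivesIn_split m' [s] (s₂ :: l'') w (by simpa using h)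
          obtain ⟨ts₁, e1, e2, e3⟩ := ihk [s] (by simp at hk ⊢; omega) w₁ n₁ (by omega) h1
          obtain ⟨ts₂, f1, f2, f3⟩ := ihk (s₂ :: l'') (by simp at hk ⊢; omega) w₂ n₂ (by omega) h2
          refine ⟨ts₁ ++ ts₂, by simp [e1, f1], ?_, by simp [yields_append, e3, f3, hw]⟩
          intro x hx
          rcases List.mem_append.1 hx with hx | hx
          · exact e2 x hx
          · exact f2 x hx

lemma exists_tree_of_mem_language {w : List T} (h : w ∈ g.language) :
    ∃ t : PT T g.NT, Good g t ∧ t.root = Symbol.nonterminal g.initial ∧ t.yield = w := by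
  have hd : g.Derives [Symbol.nonterminal g.initial] (w.map Symbol.terminal) := h
  obtain ⟨n, hn⟩ := derives_iff_derivesIn.1 hd
  obtain ⟨ts, h1, h2, h3⟩ := derivesIn_to_forest n n le_rfl _ w hn
  cases ts with
  | nil => simp at h1
  | cons t ts' =>
    cases ts' with
    | nil =>
      simp at h1 h3
      exact ⟨t, h2 t (by simp), h1, h3⟩
    | cons t₂ ts'' => simp at h1

end DerivesIn

section Pump
variable {g : ContextFreeGrammar.{uT} T}

theorem cfg_pump_down (g : ContextFreeGrammar.{uT} T) :
    ∃ p : ℕ, 1 ≤ p ∧ ∀ z ∈ g.language, p < z.length →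
      ∃ u v x y w : List T, z = u ++ v ++ x ++ y ++ w ∧
        v.length + x.length + y.length ≤ p ∧ 1 ≤ v.length + y.length ∧
        u ++ x ++ w ∈ g.language := by
  classical
  set J := (g.rules.image ContextFreeRule.input).card with hJ
  set M := max 2 (g.rules.sup fun r => r.output.length) with hMdef
  have hM2 : 2 ≤ M := le_max_left _ _
  have hMr : ∀ r ∈ g.rules, r.output.length ≤ M :=
    fun r hr => le_trans (Finset.le_sup (f := fun r => r.output.length) hr) (le_max_right _ _)
  refine ⟨M ^ (J + 1), Nat.one_le_pow _ _ (by omega), ?_⟩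
  intro z hz hlen
  -- minimal tree for z
  have hS : {n : ℕ | ∃ t : PT T g.NT, Good g t ∧ t.root = Symbol.nonterminal g.initial ∧
      t.yield = z ∧ t.size = n}.Nonempty := by
    obtain ⟨t, h1, h2, h3⟩ := exists_tree_of_mem_language hz
    exact ⟨t.size, t, h1, h2, h3, rfl⟩
  obtain ⟨t, hgt, hroot, hyield, hsize⟩ := Nat.sInf_mem hS
  have hmin : ∀ t' : PT T g.NT, Good g t' → t'.root = Symbol.nonterminal g.initial →
      t'.yield = z → t.size ≤ t'.size := by
    intro t' h1 h2 h3
    rw [hsize]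
    exact Nat.sInf_le ⟨t', h1, h2, h3, rfl⟩
  -- the tree is tall
  have hht : J + 1 ≤ t.height := by
    have hb := (yield_bound hM2 hMr t.size).1 t le_rfl hgt
    rw [hyield] at hb
    have : M ^ (J + 1) < M ^ t.height := lt_of_lt_of_le hlen hb
    have := (Nat.pow_lt_pow_iff_right (by omega : 1 < M)).1 this
    omega
  obtain ⟨t', hsub', hh'⟩ := exists_sub_height t.size t le_rfl (J + 1) (by omega) hht
  have hgt' : Good g t' := good_of_sub hsub' hgt
  obtain ⟨l, hlen', hpw, hmem⟩ := chain_lemma t'.size t' le_rfl hgt'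
  -- pigeonhole
  have hcard : (g.rules.image ContextFreeRule.input).card < (Finset.univ : Finset (Fin l.length)).card := by
    simp only [Finset.card_univ, Fintype.card_fin]
    omega
  have hmaps : ∀ i : Fin l.length, (l.get i).1 ∈ g.rules.image ContextFreeRule.input := by
    intro i
    obtain ⟨_, hgp, c, hc⟩ := hmem (l.get i) (List.get_mem l i)
    rw [hc] at hgp
    cases hgp with
    | node A c hr _ => exact Finset.mem_image.2 ⟨_, hr, rfl⟩
  obtain ⟨i, j, hij, heq⟩ : ∃ i j : Fin l.length, i < j ∧ (l.get i).1 = (l.get j).1 := by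
    obtain ⟨i, _, j, _, hne, heq⟩ :=
      Finset.exists_ne_map_eq_of_card_lt_of_maps_to hcard (fun i _ => hmaps i)
    rcases hne.lt_or_gt with h | h
    · exact ⟨i, j, h, heq⟩
    · exact ⟨j, i, h, heq.symm⟩
  obtain ⟨hsub2, hsize2⟩ := List.pairwise_iff_get.1 hpw i j hij
  have hmemi : l.get i ∈ l := List.get_mem l i
  have hmemj : l.get j ∈ l := List.get_mem l j
  set t₁ := (l.get i).2 with ht₁
  set t₂ := (l.get j).2 with ht₂
  obtain ⟨hsubt₁, hgt₁, c₁, hc₁⟩ := hmem (l.get i) hmemi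
  obtain ⟨hsubt₂, hgt₂, c₂, hc₂⟩ := hmem (l.get j) hmemj
  have hroot₁ : t₁.root = Symbol.nonterminal (l.get i).1 := by rw [ht₁, hc₁]; rfl
  have hroot₂ : t₂.root = Symbol.nonterminal (l.get i).1 := by rw [ht₂, hc₂, heq]; rfl
  have hsubt : Sub t₁ t := hsubt₁.trans hsub'
  obtain ⟨v, y, hy1, _⟩ := sub_context hsub2 hgt₁
  obtain ⟨u, w, hy2, hd2⟩ := sub_context hsubt hgt
  refine ⟨u, v, t₂.yield, y, w, ?_, ?_, ?_, ?_⟩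
  · rw [← hyield, hy2, hy1]; simp
  · have hb := (yield_bound hM2 hMr t₁.size).1 t₁ le_rfl hgt₁
    have hhle : t₁.height ≤ t'.height := hsubt₁.height_le
    have : M ^ t₁.height ≤ M ^ (J + 1) := by
      rw [← hh']
      exact Nat.pow_le_pow_right (by omega) hhle
    have hlen1 : t₁.yield.length ≤ M ^ (J + 1) := le_trans hb this
    rw [hy1] at hlen1
    simp only [List.length_append] at hlen1
    omega
  · by_contra hcon
    push_neg at hcon
    have hv : v = [] := List.length_eq_zero_iff.1 (by omega)
    have hy : y = [] := List.length_eq_zero_iff.1 (by omega)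
    subst hv; subst hy
    simp only [List.append_nil, List.nil_append] at hy1
    obtain ⟨t'', hg'', hroot'', hsz'', u', z', hyt, hyy''⟩ :=
      sub_replace hsubt hgt t₂ hgt₂ (by rw [hroot₂, hroot₁])
    have hyieldeq : t''.yield = z := by
      rw [hyy'', ← hy1, ← hyt, hyield]
    have h1 := hmin t'' hg'' (by rw [hroot'', hroot]) hyieldeq
    omega
  · have hx : g.Derives [Symbol.nonterminal (l.get i).1] (t₂.yield.map Symbol.terminal) := by
      have := good_sound_tree hgt₂
      rwa [hroot₂] at this
    rw [hroot, hroot₁] at hd2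
    have hstep : g.Derives
        (u.map Symbol.terminal ++ [Symbol.nonterminal (l.get i).1] ++ w.map Symbol.terminal)
        (u.map Symbol.terminal ++ t₂.yield.map Symbol.terminal ++ w.map Symbol.terminal) := by
      have := derives_append (Derives.refl (g := g) (u.map Symbol.terminal))
        (derives_append hx (Derives.refl (g := g) (w.map Symbol.terminal)))
      simpa [List.append_assoc] using this
    have : g.Derives [Symbol.nonterminal g.initial]
        ((u ++ t₂.yield ++ w).map Symbol.terminal) := by
      refine hd2.trans ?_
      simpa [List.append_assoc] using hstep
    exact this

end Pump

section Copy

/-- Characteristic function of the word 0^p 1^p 0^p 1^p. -/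
def Zc (p k : ℕ) : Fin 2 :=
  if k < p then 0 else if k < 2*p then 1 else if k < 3*p then 0 else 1

lemma Zc_0a {p k : ℕ} (h : k < p) : Zc p k = 0 := by simp [Zc, h]
lemma Zc_1a {p k : ℕ} (h1 : p ≤ k) (h2 : k < 2*p) : Zc p k = 1 := by
  simp only [Zc]; rw [if_neg (by omega), if_pos h2]
lemma Zc_0b {p k : ℕ} (h1 : 2*p ≤ k) (h2 : k < 3*p) : Zc p k = 0 := by
  simp only [Zc]; rw [if_neg (by omega), if_neg (by omega), if_pos h2]
lemma Zc_1b {p k : ℕ} (h1 : 3*p ≤ k) : Zc p k = 1 := by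
  simp only [Zc]; rw [if_neg (by omega), if_neg (by omega), if_neg (by omega)]

lemma Zget (p k : ℕ)
    (h : k < (List.replicate p (0 : Fin 2) ++ List.replicate p (1 : Fin 2) ++
      List.replicate p (0 : Fin 2) ++ List.replicate p (1 : Fin 2)).length) :
    (List.replicate p (0 : Fin 2) ++ List.replicate p (1 : Fin 2) ++
      List.replicate p (0 : Fin 2) ++ List.replicate p (1 : Fin 2))[k] = Zc p k := by
  have hlen : k < 4*p := by simp at h; omega
  simp only [List.getElem_append, List.getElem_replicate, List.length_append,
    List.length_replicate, Zc]
  split_ifs <;> first | rfl | omega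

theorem not_contextFree_copy :
    ¬ Language.IsContextFree {z : List (Fin 2) | ∃ w : List (Fin 2), w ≠ [] ∧ z = w ++ w} := by
  rintro ⟨g, hg⟩
  obtain ⟨p, hp1, hpump⟩ := cfg_pump_down g
  have hZmem : (List.replicate p (0 : Fin 2) ++ List.replicate p (1 : Fin 2) ++
      List.replicate p (0 : Fin 2) ++ List.replicate p (1 : Fin 2)) ∈ g.language := by
    rw [hg]
    refine ⟨List.replicate p (0 : Fin 2) ++ List.replicate p (1 : Fin 2), ?_, by simp⟩
    intro hcon
    have := congrArg List.length hcon
    simp at this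
    omega
  have hZlen : (List.replicate p (0 : Fin 2) ++ List.replicate p (1 : Fin 2) ++
      List.replicate p (0 : Fin 2) ++ List.replicate p (1 : Fin 2)).length = 4*p := by
    simp; omega
  obtain ⟨u, v, x, y, w, hZeq, hsmall, hpos, hmem0⟩ :=
    hpump _ hZmem (by rw [hZlen]; omega)
  rw [hg] at hmem0
  obtain ⟨s, hsne, hz0⟩ := hmem0
  have hsum : u.length + v.length + x.length + y.length + w.length = 4*p := by
    have := congrArg List.length hZeq
    rw [hZlen] at this
    simp at this
    omega
  have hLs : 2 * s.length = 4*p - (v.length + y.length) := by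
    have := congrArg List.length hz0
    simp at this
    omega
  have hq2 : v.length + y.length = 2*(2*p - s.length) := by omega
  have hq1 : 1 ≤ 2*p - s.length := by omega
  have hqp : 2*(2*p - s.length) ≤ p := by omega
  -- getElem access lemmas
  have hzlow : ∀ (k : ℕ), k < u.length → ∀ (h0 : k < (u ++ x ++ w).length),
      (u ++ x ++ w)[k] = Zc p k := by
    intro k hk h0
    have h1 : (u ++ x ++ w)[k] = u[k] := by
      rw [List.getElem_of_eq (show u ++ x ++ w = u ++ (x ++ w) by simp) h0]
      exact List.getElem_append_left hk
    have hkZ : k < (List.replicate p (0 : Fin 2) ++ List.replicate p (1 : Fin 2) ++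
        List.replicate p (0 : Fin 2) ++ List.replicate p (1 : Fin 2)).length := by
      rw [hZlen]; simp at h0; omega
    have h2 : (List.replicate p (0 : Fin 2) ++ List.replicate p (1 : Fin 2) ++
        List.replicate p (0 : Fin 2) ++ List.replicate p (1 : Fin 2))[k] = u[k] := by
      rw [List.getElem_of_eq (show _ = u ++ (v ++ x ++ y ++ w) by rw [hZeq]; simp) hkZ]
      exact List.getElem_append_left hk
    rw [h1, ← h2, Zget p k hkZ]
  have hzhigh : ∀ (k : ℕ), u.length + x.length ≤ k → ∀ (h0 : k < (u ++ x ++ w).length),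
      (u ++ x ++ w)[k] = Zc p (k + (v.length + y.length)) := by
    intro k hk h0
    have h0' : k < u.length + x.length + w.length := by
      have := h0; simp only [List.length_append] at this; omega
    have hwk : k - (u.length + x.length) < w.length := by omega
    have h1 : (u ++ x ++ w)[k] = w[k - (u.length + x.length)]'hwk := by
      have hux : (u ++ x).length ≤ k := by simp only [List.length_append]; omega
      rw [List.getElem_append_right hux]
      congr 1
      simp only [List.length_append]
    have hkZ : k + (v.length + y.length) <
        (List.replicate p (0 : Fin 2) ++ List.replicate p (1 : Fin 2) ++
        List.replicate p (0 : Fin 2) ++ List.replicate p (1 : Fin 2)).length := by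
      rw [hZlen]; omega
    have h2 : (List.replicate p (0 : Fin 2) ++ List.replicate p (1 : Fin 2) ++
        List.replicate p (0 : Fin 2) ++ List.replicate p (1 : Fin 2))[k + (v.length + y.length)] =
        w[k - (u.length + x.length)]'hwk := by
      rw [List.getElem_of_eq (show _ = (u ++ v ++ x ++ y) ++ w from hZeq) hkZ]
      have hpre : (u ++ v ++ x ++ y).length ≤ k + (v.length + y.length) := by
        simp only [List.length_append]; omega
      rw [List.getElem_append_right hpre]
      congr 1
      simp only [List.length_append]
      omega
    rw [h1, ← h2, Zget p _ hkZ]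
  -- periodicity from u ++ x ++ w = s ++ s
  have hper : ∀ (k : ℕ), k < s.length → ∀ (h0 : k < (u ++ x ++ w).length)
      (h2 : k + s.length < (u ++ x ++ w).length),
      (u ++ x ++ w)[k] = (u ++ x ++ w)[k + s.length] := by
    intro k hk h0 h2
    have e1 : (u ++ x ++ w)[k]'h0 = s[k] := by
      rw [List.getElem_of_eq hz0 h0]
      exact List.getElem_append_left hk
    have e2 : (u ++ x ++ w)[k + s.length]'h2 = s[k] := by
      rw [List.getElem_of_eq hz0 h2]
      rw [List.getElem_append_right (by omega)]
      congr 1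
      omega
    rw [e1, e2]
  have hlen0 : (u ++ x ++ w).length = 4*p - 2*(2*p - s.length) := by simp; omega
  have h01 : (0 : Fin 2) ≠ 1 := by decide
  -- case analysis on the position of the pumped window
  rcases le_or_gt (u.length + v.length + x.length + y.length) (2*p) with hcase | hcase
  · -- window inside the first half
    have hb0 : 2*p - 2*(2*p - s.length) < (u ++ x ++ w).length := by omega
    have hb1 : 2*p - 2*(2*p - s.length) + s.length < (u ++ x ++ w).length := by omega
    have e1 := hzhigh (2*p - 2*(2*p - s.length)) (by omega) hb0
    have e2 := hzhigh (2*p - 2*(2*p - s.length) + s.length) (by omega) hb1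
    have e3 := hper (2*p - 2*(2*p - s.length)) (by omega) hb0 hb1
    rw [e1, e2] at e3
    rw [show 2*p - 2*(2*p - s.length) + (v.length + y.length) = 2*p by omega,
        show 2*p - 2*(2*p - s.length) + s.length + (v.length + y.length)
          = 4*p - (2*p - s.length) by omega] at e3
    rw [Zc_0b (by omega) (by omega), Zc_1b (by omega)] at e3
    exact h01 e3
  · rcases le_or_gt (2*p) u.length with hcase2 | hcase2
    · -- window inside the second half
      have hb0 : (2*p - s.length) - 1 < (u ++ x ++ w).length := by omega
      have hb1 : (2*p - s.length) - 1 + s.length < (u ++ x ++ w).length := by omega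
      have e1 := hzlow ((2*p - s.length) - 1) (by omega) hb0
      have e2 := hzlow ((2*p - s.length) - 1 + s.length) (by omega) hb1
      have e3 := hper ((2*p - s.length) - 1) (by omega) hb0 hb1
      rw [e1, e2] at e3
      rw [Zc_0a (by omega), show (2*p - s.length) - 1 + s.length = 2*p - 1 by omega,
          Zc_1a (by omega) (by omega)] at e3
      exact h01 e3
    · -- window straddles the midpoint
      have hage : p + 1 ≤ u.length := by omega
      have hb0 : p - 1 < (u ++ x ++ w).length := by omega
      have hb1 : p - 1 + s.length < (u ++ x ++ w).length := by omega
      have e1 := hzlow (p - 1) (by omega) hb0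
      have e2 := hzhigh (p - 1 + s.length) (by omega) hb1
      have e3 := hper (p - 1) (by omega) hb0 hb1
      rw [e1, e2] at e3
      rw [Zc_0a (by omega),
          show p - 1 + s.length + (v.length + y.length) = 3*p - 1 + (2*p - s.length) by omega,
          Zc_1b (by omega)] at e3
      exact h01 e3

end Copy

section NotReg

/-- Characteristic function of 0^A 1 0^B 1. -/
def Wc (A B k : ℕ) : Fin 2 :=
  if k < A then 0 else if k = A then 1 else if k < A + 1 + B then 0 else 1

lemma Wget (A B k : ℕ)
    (h : k < (List.replicate A (0 : Fin 2) ++ [1] ++ List.replicate B (0 : Fin 2) ++ [1]).length) :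
    (List.replicate A (0 : Fin 2) ++ [1] ++ List.replicate B (0 : Fin 2) ++ [1])[k] = Wc A B k := by
  have hlen : k < A + 1 + B + 1 := by simp at h; omega
  simp only [List.getElem_append, List.getElem_replicate, List.length_append,
    List.length_replicate, List.length_cons, List.length_nil, List.getElem_singleton, Wc]
  split_ifs <;> first | rfl | omega

theorem not_regular_copy :
    ¬ Language.IsRegular {z : List (Fin 2) | ∃ w : List (Fin 2), w ≠ [] ∧ z = w ++ w} := by
  rintro ⟨σ, fσ, M, hM⟩
  have hn1 : 1 ≤ Fintype.card σ := Fintype.card_pos_iff.2 ⟨M.start⟩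
  set n := Fintype.card σ with hn
  have hXmem : (List.replicate n (0 : Fin 2) ++ [1] ++ List.replicate n (0 : Fin 2) ++ [1])
      ∈ M.accepts := by
    rw [hM]
    refine ⟨List.replicate n (0 : Fin 2) ++ [1], by simp, by simp⟩
  have hXlen : (List.replicate n (0 : Fin 2) ++ [1] ++ List.replicate n (0 : Fin 2) ++ [1]).length
      = 2*n + 2 := by simp; omega
  obtain ⟨al, bl, cl, hX, hab, hbne, hpump⟩ := M.pumping_lemma hXmem (by omega)
  have hac : al ++ cl ∈ M.accepts := by
    apply hpump
    refine ⟨al ++ [], ⟨al, rfl, [], Language.nil_mem_kstar _, rfl⟩, cl, rfl, by simp⟩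
  rw [hM] at hac
  obtain ⟨s, hsne, hz0⟩ := hac
  have hsum : al.length + bl.length + cl.length = 2*n + 2 := by
    have := congrArg List.length hX
    rw [hXlen] at this
    simp at this
    omega
  have hLs : 2 * s.length = 2*n + 2 - bl.length := by
    have := congrArg List.length hz0
    simp at this
    omega
  have hb1 : 1 ≤ bl.length := by
    cases bl with
    | nil => exact absurd rfl hbne
    | cons _ _ => simp
  -- bl.length = 2*d with d := n + 1 - s.length ≥ 1, 2*d ≤ n
  have hd2 : bl.length = 2*(n + 1 - s.length) := by omega
  have hd1 : 1 ≤ n + 1 - s.length := by omega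
  have hdn : 2*(n + 1 - s.length) ≤ n := by omega
  -- access lemmas for al ++ cl
  have hzlow : ∀ (k : ℕ), k < al.length → ∀ (h0 : k < (al ++ cl).length),
      (al ++ cl)[k] = Wc n n k := by
    intro k hk h0
    have h1 : (al ++ cl)[k] = al[k] := List.getElem_append_left hk
    have hkX : k < (List.replicate n (0 : Fin 2) ++ [1] ++ List.replicate n (0 : Fin 2) ++
        [1]).length := by rw [hXlen]; omega
    have h2 : (List.replicate n (0 : Fin 2) ++ [1] ++ List.replicate n (0 : Fin 2) ++ [1])[k]
        = al[k] := by
      rw [List.getElem_of_eq (show _ = al ++ (bl ++ cl) by rw [hX]; simp) hkX]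
      exact List.getElem_append_left hk
    rw [h1, ← h2, Wget n n k hkX]
  have hzhigh : ∀ (k : ℕ), al.length ≤ k → ∀ (h0 : k < (al ++ cl).length),
      (al ++ cl)[k] = Wc n n (k + bl.length) := by
    intro k hk h0
    have h0' : k < al.length + cl.length := by
      have := h0; simp only [List.length_append] at this; omega
    have hck : k - al.length < cl.length := by omega
    have h1 : (al ++ cl)[k] = cl[k - al.length]'hck := by
      rw [List.getElem_append_right hk]
    have hkX : k + bl.length < (List.replicate n (0 : Fin 2) ++ [1] ++
        List.replicate n (0 : Fin 2) ++ [1]).length := by rw [hXlen]; omega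
    have h2 : (List.replicate n (0 : Fin 2) ++ [1] ++ List.replicate n (0 : Fin 2) ++
        [1])[k + bl.length] = cl[k - al.length]'hck := by
      rw [List.getElem_of_eq (show _ = (al ++ bl) ++ cl from hX) hkX]
      have hpre : (al ++ bl).length ≤ k + bl.length := by simp only [List.length_append]; omega
      rw [List.getElem_append_right hpre]
      congr 1
      simp only [List.length_append]
      omega
    rw [h1, ← h2, Wget n n _ hkX]
  have hper : ∀ (k : ℕ), k < s.length → ∀ (h0 : k < (al ++ cl).length)
      (h2 : k + s.length < (al ++ cl).length),
      (al ++ cl)[k] = (al ++ cl)[k + s.length] := by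
    intro k hk h0 h2
    have e1 : (al ++ cl)[k]'h0 = s[k] := by
      rw [List.getElem_of_eq hz0 h0]
      exact List.getElem_append_left hk
    have e2 : (al ++ cl)[k + s.length]'h2 = s[k] := by
      rw [List.getElem_of_eq hz0 h2]
      rw [List.getElem_append_right (by omega)]
      congr 1
      omega
    rw [e1, e2]
  have hlen0 : (al ++ cl).length = 2*n + 2 - bl.length := by simp; omega
  -- take k = n - bl.length : the first 1 in al ++ cl
  have hb0 : n - bl.length < (al ++ cl).length := by omega
  have hb1' : n - bl.length + s.length < (al ++ cl).length := by omega
  have e1 := hzhigh (n - bl.length) (by omega) hb0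
  have e2 := hzhigh (n - bl.length + s.length) (by omega) hb1'
  have e3 := hper (n - bl.length) (by omega) hb0 hb1'
  rw [e1, e2] at e3
  rw [show n - bl.length + bl.length = n by omega] at e3
  have w1 : Wc n n n = 1 := by
    simp only [Wc]; split_ifs <;> first | rfl | omega
  have w0 : Wc n n (n - bl.length + s.length + bl.length) = 0 := by
    simp only [Wc]; split_ifs <;> first | rfl | omega
  rw [w1, w0] at e3
  exact absurd e3 (by decide)

end NotReg

section BD
variable {α : Type*} [Inhabited α]

lemma odds_evens_double (l : List (List α)) (h : ∀ u ∈ l, ∃ a, u = [a, a]) :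
    odds l.flatten = l.map List.headI ∧ evens l.flatten = l.map List.headI := by
  induction l with
  | nil => simp [odds, evens]
  | cons u l ih =>
    obtain ⟨a, rfl⟩ := h u (by simp)
    have ih' := ih (fun u hu => h u (by simp [hu]))
    have hfl : ([a, a] :: l).flatten = a :: a :: l.flatten := by simp
    rw [hfl]
    constructor
    · show a :: evens (a :: l.flatten) = _
      rw [show evens (a :: l.flatten) = odds l.flatten from rfl, ih'.1]
      simp
    · show odds (a :: l.flatten) = _
      rw [show odds (a :: l.flatten) = a :: evens l.flatten from rfl, ih'.2]
      simp

lemma bd_double (l : List (List α)) (h : ∀ u ∈ l, ∃ a, u = [a, a]) :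
    bd l.flatten = l.map List.headI ++ l.map List.headI := by
  obtain ⟨h1, h2⟩ := odds_evens_double l h
  rw [bd, h1, h2]

lemma bdLang_eq_copy :
    bdLang {w : List (Fin 2) | ∃ l : List (List (Fin 2)), l ≠ [] ∧
        (∀ u ∈ l, u = [0, 0] ∨ u = [1, 1]) ∧ w = l.flatten} =
      {z : List (Fin 2) | ∃ w : List (Fin 2), w ≠ [] ∧ z = w ++ w} := by
  ext z
  constructor
  · rintro ⟨w, ⟨l, hne, hbl, rfl⟩, rfl⟩
    refine ⟨l.map List.headI, by simpa using hne, ?_⟩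
    exact (bd_double l (fun u hu => by
      rcases hbl u hu with rfl | rfl
      · exact ⟨0, rfl⟩
      · exact ⟨1, rfl⟩)).symm ▸ rfl
  · rintro ⟨w, hne, rfl⟩
    refine ⟨(w.map (fun a => [a, a])).flatten, ⟨w.map (fun a => [a, a]), by simpa using hne,
      ?_, rfl⟩, ?_⟩
    · intro u hu
      simp only [List.mem_map] at hu
      obtain ⟨a, _, rfl⟩ := hu
      fin_cases a
      · exact Or.inl rfl
      · exact Or.inr rfl
    · rw [bd_double _ (fun u hu => by
        simp only [List.mem_map] at hu
        obtain ⟨a, _, rfl⟩ := hu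
        exact ⟨a, rfl⟩)]
      have : List.map (List.headI ∘ fun a => [a, a]) w = w := by
        clear hne
        induction w with
        | nil => rfl
        | cons b t ih => simpa using ih
      rw [List.map_map, this]

end BD

section DFAL

def dfaL : DFA (Fin 2) (Fin 5) where
  step q c :=
    if q = 0 ∨ q = 3 then (if c = 0 then 1 else 2)
    else if q = 1 then (if c = 0 then 3 else 4)
    else if q = 2 then (if c = 1 then 3 else 4)
    else 4
  start := 0
  accept := {3}

lemma dfaL_dead : ∀ w : List (Fin 2), dfaL.evalFrom 4 w = 4 := by
  intro w
  induction w with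
  | nil => rfl
  | cons a l ih =>
    show dfaL.evalFrom (dfaL.step 4 a) l = 4
    have : dfaL.step 4 a = 4 := rfl
    rw [this, ih]

lemma dfaL_block : ∀ (c : Fin 2) (q : Fin 5), q = 0 ∨ q = 3 → dfaL.evalFrom q [c, c] = 3 := by
  intro c q hq
  rcases hq with rfl | rfl <;> fin_cases c <;> rfl

lemma dfaL_acceptL : ∀ l : List (List (Fin 2)), l ≠ [] →
    (∀ u ∈ l, u = [0, 0] ∨ u = [1, 1]) → ∀ q : Fin 5, q = 0 ∨ q = 3 →
    dfaL.evalFrom q l.flatten = 3 := by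
  intro l
  induction l with
  | nil => intro h; exact absurd rfl h
  | cons u l ih =>
    intro _ hbl q hq
    have hu3 : dfaL.evalFrom q u = 3 := by
      rcases hbl u (by simp) with rfl | rfl <;> exact dfaL_block _ q hq
    have : (u :: l).flatten = u ++ l.flatten := by simp
    rw [this, DFA.evalFrom_of_append, hu3]
    rcases eq_or_ne l [] with rfl | hne
    · rfl
    · exact ih hne (fun v hv => hbl v (by simp [hv])) 3 (Or.inr rfl)

lemma dfaL_rev : ∀ n : ℕ, ∀ w : List (Fin 2), w.length ≤ n → dfaL.evalFrom 0 w = 3 →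
    ∃ l : List (List (Fin 2)), l ≠ [] ∧ (∀ u ∈ l, u = [0, 0] ∨ u = [1, 1]) ∧ w = l.flatten := by
  intro n
  induction n with
  | zero =>
    intro w hw h
    obtain rfl : w = [] := List.length_eq_zero_iff.1 (by omega)
    exact absurd h (by decide)
  | succ n ih =>
    intro w hw h
    cases w with
    | nil => exact absurd h (by decide)
    | cons c w' =>
      cases w' with
      | nil => fin_cases c <;> exact absurd h (by decide)
      | cons c' w'' =>
        by_cases hcc : c' = c
        · subst hcc
          have h3 : dfaL.evalFrom 3 w'' = 3 := by
            have e : dfaL.evalFrom 0 (c' :: c' :: w'') = dfaL.evalFrom 3 w'' := by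
              show dfaL.evalFrom (dfaL.step (dfaL.step 0 c') c') w'' = _
              have : dfaL.step (dfaL.step 0 c') c' = 3 := by fin_cases c' <;> rfl
              rw [this]
            rw [← e, h]
          cases w'' with
          | nil =>
            refine ⟨[[c', c']], by simp, ?_, by simp⟩
            intro u hu
            simp at hu
            subst hu
            fin_cases c'
            · exact Or.inl rfl
            · exact Or.inr rfl
          | cons d w''' =>
            have h0 : dfaL.evalFrom 0 (d :: w''') = 3 := by
              have e : dfaL.evalFrom 3 (d :: w''') = dfaL.evalFrom 0 (d :: w''') := by
                show dfaL.evalFrom (dfaL.step 3 d) w''' = dfaL.evalFrom (dfaL.step 0 d) w'''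
                have : dfaL.step 3 d = dfaL.step 0 d := rfl
                rw [this]
              rw [← e, h3]
            obtain ⟨l, hne, hbl, hfl⟩ := ih (d :: w''') (by simp at hw ⊢; omega) h0
            refine ⟨[c', c'] :: l, by simp, ?_, by simp [← hfl]⟩
            intro u hu
            rcases List.mem_cons.1 hu with rfl | hu
            · fin_cases c'
              · exact Or.inl rfl
              · exact Or.inr rfl
            · exact hbl u hu
        · exfalso
          have e : dfaL.evalFrom 0 (c :: c' :: w'') = dfaL.evalFrom 4 w'' := by
            show dfaL.evalFrom (dfaL.step (dfaL.step 0 c) c') w'' = _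
            have : dfaL.step (dfaL.step 0 c) c' = 4 := by
              fin_cases c <;> fin_cases c' <;> first | (exact absurd rfl hcc) | rfl
            rw [this]
          rw [e, dfaL_dead] at h
          exact absurd h (by decide)

lemma dfaL_accepts : dfaL.accepts =
    {w : List (Fin 2) | ∃ l : List (List (Fin 2)), l ≠ [] ∧
      (∀ u ∈ l, u = [0, 0] ∨ u = [1, 1]) ∧ w = l.flatten} := by
  ext w
  rw [DFA.mem_accepts]
  constructor
  · intro h
    exact dfaL_rev w.length w le_rfl h
  · rintro ⟨l, hne, hbl, rfl⟩
    show dfaL.evalFrom 0 l.flatten ∈ ({3} : Set (Fin 5))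
    rw [dfaL_acceptL l hne hbl 0 (Or.inl rfl)]
    rfl

end DFAL

section GrammarL

instance {T N : Type*} [DecidableEq T] [DecidableEq N] :
    DecidableEq (ContextFreeRule T N) := fun r s =>
  decidable_of_iff (r.input = s.input ∧ r.output = s.output)
    ⟨fun ⟨h1, h2⟩ => by cases r; cases s; simp_all, fun h => by subst h; exact ⟨rfl, rfl⟩⟩

abbrev gL : ContextFreeGrammar (Fin 2) :=
  ⟨Unit, (), {⟨(), [.terminal 0, .terminal 0]⟩, ⟨(), [.terminal 1, .terminal 1]⟩,
    ⟨(), [.terminal 0, .terminal 0, .nonterminal ()]⟩,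
    ⟨(), [.terminal 1, .terminal 1, .nonterminal ()]⟩}⟩

lemma gL_rule1 (c : Fin 2) :
    (⟨(), [Symbol.terminal c, Symbol.terminal c]⟩ : ContextFreeRule (Fin 2) Unit)
      ∈ gL.rules := by
  fin_cases c <;> simp [gL]

lemma gL_rule2 (c : Fin 2) :
    (⟨(), [Symbol.terminal c, Symbol.terminal c, Symbol.nonterminal ()]⟩ :
      ContextFreeRule (Fin 2) Unit) ∈ gL.rules := by
  fin_cases c <;> simp [gL]

lemma gL_gen : ∀ l : List (List (Fin 2)), l ≠ [] → (∀ u ∈ l, u = [0, 0] ∨ u = [1, 1]) →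
    gL.Derives [Symbol.nonterminal ()] ((l.flatten).map Symbol.terminal) := by
  intro l
  induction l with
  | nil => intro h; exact absurd rfl h
  | cons u l ih =>
    intro _ hbl
    obtain ⟨c, rfl⟩ : ∃ c : Fin 2, u = [c, c] := by
      rcases hbl u (by simp) with rfl | rfl
      · exact ⟨0, rfl⟩
      · exact ⟨1, rfl⟩
    rcases eq_or_ne l [] with rfl | hne
    · have hstep : gL.Produces [Symbol.nonterminal ()]
          [Symbol.terminal c, Symbol.terminal c] :=
        ⟨⟨(), [Symbol.terminal c, Symbol.terminal c]⟩, gL_rule1 c,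
          ContextFreeRule.Rewrites.input_output⟩
      have : ([[c, c]] : List (List (Fin 2))).flatten = [c, c] := by simp
      rw [this]
      exact hstep.single
    · have hstep : gL.Produces [Symbol.nonterminal ()]
          [Symbol.terminal c, Symbol.terminal c, Symbol.nonterminal ()] :=
        ⟨⟨(), [Symbol.terminal c, Symbol.terminal c, Symbol.nonterminal ()]⟩, gL_rule2 c,
          ContextFreeRule.Rewrites.input_output⟩
      have hrest := (ih hne (fun v hv => hbl v (by simp [hv]))).append_left
        [Symbol.terminal c, Symbol.terminal c]
      have : (([c, c] :: l).flatten).map (Symbol.terminal : Fin 2 → Symbol (Fin 2) Unit)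
          = [Symbol.terminal c, Symbol.terminal c] ++ (l.flatten).map Symbol.terminal := by
        simp
      rw [this]
      exact hstep.trans_derives (by simpa using hrest)

lemma term_nt_split : ∀ (A : List (Fin 2)) (p q : List (Symbol (Fin 2) Unit)),
    A.map Symbol.terminal ++ [Symbol.nonterminal ()] = p ++ [Symbol.nonterminal ()] ++ q →
    p = A.map Symbol.terminal ∧ q = [] := by
  intro A
  induction A with
  | nil =>
    intro p q h
    cases p with
    | nil => simpa using h.symm
    | cons s p' =>
      exfalso
      simp only [List.map_nil, List.nil_append, List.cons_append] at h
      injection h with h1 h2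
      subst h1
      have := congrArg List.length h2
      simp at this
  | cons a A' ih =>
    intro p q h
    cases p with
    | nil =>
      exfalso
      simp only [List.map_cons, List.cons_append, List.nil_append] at h
      injection h with h1 _
      cases h1
    | cons s p' =>
      simp only [List.map_cons, List.cons_append] at h
      injection h with h1 h2
      obtain ⟨rfl, rfl⟩ := ih p' q h2
      exact ⟨by rw [← h1]; simp, rfl⟩

lemma gL_inv {st : List (Symbol (Fin 2) Unit)}
    (h : gL.Derives [Symbol.nonterminal ()] st) :
    ∃ l : List (List (Fin 2)), (∀ u ∈ l, u = [0, 0] ∨ u = [1, 1]) ∧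
      (st = (l.flatten).map Symbol.terminal ++ [Symbol.nonterminal ()] ∨
        (l ≠ [] ∧ st = (l.flatten).map Symbol.terminal)) := by
  induction h with
  | refl => exact ⟨[], by simp, Or.inl (by simp)⟩
  | tail hd hp ih =>
    obtain ⟨l, hbl, hcase⟩ := ih
    obtain ⟨r, hr, hrw⟩ := hp
    obtain ⟨p, q, hb, hc⟩ := hrw.exists_parts
    rcases hcase with hb' | ⟨hne, hb'⟩
    · -- previous form ends with the nonterminal
      rw [hb'] at hb
      obtain ⟨rfl, rfl⟩ := term_nt_split _ p q hb
      have hrules : r = ⟨(), [Symbol.terminal 0, Symbol.terminal 0]⟩ ∨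
          r = ⟨(), [Symbol.terminal 1, Symbol.terminal 1]⟩ ∨
          r = ⟨(), [Symbol.terminal 0, Symbol.terminal 0, Symbol.nonterminal ()]⟩ ∨
          r = ⟨(), [Symbol.terminal 1, Symbol.terminal 1, Symbol.nonterminal ()]⟩ := by
        simpa [gL] using hr
      rcases hrules with rfl | rfl | rfl | rfl
      · refine ⟨l ++ [[0, 0]], ?_, Or.inr ⟨by simp, ?_⟩⟩
        · intro u hu
          rcases List.mem_append.1 hu with hu | hu
          · exact hbl u hu
          · simp at hu; subst hu; exact Or.inl rfl
        · rw [hc]; simp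
      · refine ⟨l ++ [[1, 1]], ?_, Or.inr ⟨by simp, ?_⟩⟩
        · intro u hu
          rcases List.mem_append.1 hu with hu | hu
          · exact hbl u hu
          · simp at hu; subst hu; exact Or.inr rfl
        · rw [hc]; simp
      · refine ⟨l ++ [[0, 0]], ?_, Or.inl ?_⟩
        · intro u hu
          rcases List.mem_append.1 hu with hu | hu
          · exact hbl u hu
          · simp at hu; subst hu; exact Or.inl rfl
        · rw [hc]; simp
      · refine ⟨l ++ [[1, 1]], ?_, Or.inl ?_⟩
        · intro u hu
          rcases List.mem_append.1 hu with hu | hu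
          · exact hbl u hu
          · simp at hu; subst hu; exact Or.inr rfl
        · rw [hc]; simp
    · -- previous form is all terminals : impossible to rewrite
      exfalso
      rw [hb'] at hb
      have : Symbol.nonterminal () ∈ (l.flatten).map
          (Symbol.terminal : Fin 2 → Symbol (Fin 2) Unit) := by
        rw [hb]
        simp
      simp only [List.mem_map] at this
      obtain ⟨a, _, ha⟩ := this
      cases ha

lemma gL_language : gL.language =
    {w : List (Fin 2) | ∃ l : List (List (Fin 2)), l ≠ [] ∧
      (∀ u ∈ l, u = [0, 0] ∨ u = [1, 1]) ∧ w = l.flatten} := by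
  ext w
  rw [ContextFreeGrammar.mem_language_iff]
  constructor
  · intro h
    obtain ⟨l, hbl, hcase⟩ := gL_inv h
    rcases hcase with hcase | ⟨hne, hcase⟩
    · exfalso
      have : Symbol.nonterminal () ∈ w.map (Symbol.terminal : Fin 2 → Symbol (Fin 2) Unit) := by
        rw [hcase]; simp
      simp only [List.mem_map] at this
      obtain ⟨a, _, ha⟩ := this
      cases ha
    · have hinj : Function.Injective (Symbol.terminal : Fin 2 → Symbol (Fin 2) Unit) :=
        fun a b hab => by injection hab
      have := List.map_injective_iff.2 hinj hcase
      exact ⟨l, hne, hbl, this⟩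
  · rintro ⟨l, hne, hbl, rfl⟩
    exact gL_gen l hne hbl

end GrammarL

/-- For the regular language L = (00 + 11)⁺ over Fin 2, the binary decimation
bd(L) is the (non-context-free) copy language {ww : w ≠ ε}; hence neither the
regular nor the context-free languages are closed under bd. -/
theorem bd_copy_language :
    bdLang {w : List (Fin 2) | ∃ l : List (List (Fin 2)), l ≠ [] ∧
        (∀ u ∈ l, u = [0, 0] ∨ u = [1, 1]) ∧ w = l.flatten} =
      {z : List (Fin 2) | ∃ w : List (Fin 2), w ≠ [] ∧ z = w ++ w} ∧
    ¬ Language.IsContextFree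
        {z : List (Fin 2) | ∃ w : List (Fin 2), w ≠ [] ∧ z = w ++ w} ∧
    ¬ (∀ L : Language (Fin 2), L.IsRegular → (bdLang L).IsRegular) ∧
    ¬ (∀ L : Language (Fin 2), L.IsContextFree → (bdLang L).IsContextFree) := by
  refine ⟨bdLang_eq_copy, not_contextFree_copy, ?_, ?_⟩
  · intro h
    have hreg : Language.IsRegular {w : List (Fin 2) | ∃ l : List (List (Fin 2)), l ≠ [] ∧
        (∀ u ∈ l, u = [0, 0] ∨ u = [1, 1]) ∧ w = l.flatten} :=
      ⟨Fin 5, inferInstance, dfaL, dfaL_accepts⟩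
    have := h _ hreg
    rw [bdLang_eq_copy] at this
    exact not_regular_copy this
  · intro h
    have hcf : Language.IsContextFree {w : List (Fin 2) | ∃ l : List (List (Fin 2)), l ≠ [] ∧
        (∀ u ∈ l, u = [0, 0] ∨ u = [1, 1]) ∧ w = l.flatten} :=
      ⟨gL, gL_language⟩
    have := h _ hcf
    rw [bdLang_eq_copy] at this
    exact not_contextFree_copy this
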